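/- Let ω = exp(2πi/m), and represent elements of G = C_m ≀ S_n as generalized permutations π = (π(1),...,π(n)) with π(i) = ω^{c_i} · σ(i) for some σ ∈ S_n and 0 ≤ c_i < m. With the linear order 1·ω^{m-1} < ... < n·ω^{m-1} < ... < 1·ω < ... < n·ω < 1 < ... < n on the alphabet {j·ω^c}, for every π ∈ G: flag-major(π) = m · maj(π) + Σ_{j=0}^{m-1} j · #{i : π(i)/|π(i)| = ω^j}, where maj(π) = Σ{i : π(i) > π(i+1)} with respect to this order. -/
import Mathlib


open Finset

@[ext]
structure GenPerm (m n : ℕ) where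
  σ : Equiv.Perm (Fin n)
  c : Fin n → ZMod m
deriving DecidableEq

namespace GenPerm

variable {m n : ℕ}

instance [NeZero m] : Fintype (GenPerm m n) :=
  Fintype.ofEquiv (Equiv.Perm (Fin n) × (Fin n → ZMod m))
    { toFun := fun p => ⟨p.1, p.2⟩
      invFun := fun g => (g.σ, g.c)
      left_inv := fun p => rfl
      right_inv := fun g => rfl }

instance : Mul (GenPerm m n) := ⟨fun g h => ⟨g.σ * h.σ, fun j => g.c (h.σ j) + h.c j⟩⟩
instance : One (GenPerm m n) := ⟨⟨1, 0⟩⟩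
instance : Inv (GenPerm m n) := ⟨fun g => ⟨g.σ⁻¹, fun j => - g.c (g.σ⁻¹ j)⟩⟩

@[simp] lemma mul_σ (g h : GenPerm m n) : (g * h).σ = g.σ * h.σ := rfl
@[simp] lemma mul_c (g h : GenPerm m n) (j : Fin n) : (g * h).c j = g.c (h.σ j) + h.c j := rfl
@[simp] lemma one_σ : (1 : GenPerm m n).σ = 1 := rfl
@[simp] lemma one_c (j : Fin n) : (1 : GenPerm m n).c j = 0 := rfl
@[simp] lemma inv_σ (g : GenPerm m n) : (g⁻¹).σ = g.σ⁻¹ := rfl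
@[simp] lemma inv_c (g : GenPerm m n) (j : Fin n) : (g⁻¹).c j = - g.c (g.σ⁻¹ j) := rfl

instance : Group (GenPerm m n) where
  mul_assoc a b c := by
    ext j
    · simp [mul_assoc]
    · simp [add_assoc]
  one_mul a := by
    ext j
    · simp
    · simp
  mul_one a := by
    ext j
    · simp
    · simp
  inv_mul_cancel a := by
    ext j
    · simp
    · simp

/-- The generator `s i`: `s 0` multiplies the first letter's phase by `ω`;
for `1 ≤ i < n`, `s i` swaps positions `i` and `i+1` (1-indexed), i.e. `i-1` and `i`
(0-indexed). -/
def s (i : ℕ) : GenPerm m n :=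
  if h : i < n then
    if h0 : i = 0 then ⟨1, fun j => if j = ⟨0, by omega⟩ then 1 else 0⟩
    else ⟨Equiv.swap ⟨i - 1, by omega⟩ ⟨i, h⟩, 0⟩
  else 1

/-- `t i = s i * s (i-1) * ⋯ * s 1 * s 0`. -/
def t (i : ℕ) : GenPerm m n := ((List.range (i + 1)).map (fun j => (s (i - j) : GenPerm m n))).prod

/-- `rep k = t (n-1) ^ k (n-1) * ⋯ * t 0 ^ k 0`. -/
def rep (k : Fin n → ℕ) : GenPerm m n :=
  (List.ofFn (fun i : Fin n => (t (i : ℕ) : GenPerm m n) ^ k i)).reverse.prod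

open scoped Classical in
/-- The flag major index: the sum of the exponents in the canonical representation
`π = t (n-1) ^ k (n-1) * ⋯ * t 0 ^ k 0` with `0 ≤ k i < m * (i+1)`. -/
noncomputable def flagMajor (π : GenPerm m n) : ℕ :=
  if h : ∃ k : Fin n → ℕ, (∀ i : Fin n, k i < m * ((i : ℕ) + 1)) ∧ π = rep k
  then ∑ i, h.choose i else 0

/-- The major index of a generalized permutation with respect to the linear order
`1·ω^{m-1} < ⋯ < n·ω^{m-1} < ⋯ < 1·ω < ⋯ < n·ω < 1 < ⋯ < n`
(a 1-indexed descent at position `i` contributes `i`). -/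
def majG (π : GenPerm m n) : ℕ :=
  ∑ i ∈ Finset.range n, if h : i + 1 < n then
    (if (π.c ⟨i, by omega⟩).val < (π.c ⟨i + 1, h⟩).val ∨
        (π.c ⟨i, by omega⟩ = π.c ⟨i + 1, h⟩ ∧ π.σ ⟨i + 1, h⟩ < π.σ ⟨i, by omega⟩)
     then i + 1 else 0) else 0

/-- Coxeter length with respect to the generators `s 0, s 1, …, s (n-1)`. -/
noncomputable def len (π : GenPerm m n) : ℕ :=
  sInf {l | ∃ w : List (Fin n), w.length = l ∧ (w.map (fun i => (s (i : ℕ) : GenPerm m n))).prod = π}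


section Aux

lemma s_zero (hn : 0 < n) :
    (s 0 : GenPerm m n) = ⟨1, fun j => if j = ⟨0, hn⟩ then 1 else 0⟩ := by
  rw [s, dif_pos hn, dif_pos rfl]

lemma s_pos {i : ℕ} (hi : i < n) (h0 : i ≠ 0) :
    (s i : GenPerm m n) = ⟨Equiv.swap ⟨i - 1, by omega⟩ ⟨i, hi⟩, 0⟩ := by
  rw [s, dif_pos hi, dif_neg h0]

lemma t_zero : (t 0 : GenPerm m n) = s 0 := by
  simp [t]

lemma t_succ (i : ℕ) : (t (i+1) : GenPerm m n) = s (i+1) * t i := by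
  rw [t, t, List.range_succ_eq_map]
  simp only [List.map_cons, List.map_map, List.prod_cons]
  congr 2
  ext j
  simp

lemma t_sigma_val {i : ℕ} (hi : i < n) (j : Fin n) :
    (((t i : GenPerm m n)).σ j).val =
      if j.val = 0 then i else if j.val ≤ i then j.val - 1 else j.val := by
  induction i with
  | zero =>
    rw [t_zero, s_zero (by omega)]
    simp only [Equiv.Perm.one_apply]
    split_ifs <;> omega
  | succ i ih =>
    have hv : (((t i : GenPerm m n)).σ j).val =
        if j.val = 0 then i else if j.val ≤ i then j.val - 1 else j.val := ih (by omega)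
    rw [t_succ, s_pos (by omega) (by omega)]
    simp only [mul_σ, Equiv.Perm.mul_apply, Equiv.swap_apply_def,
      apply_ite (Fin.val), Fin.ext_iff, Fin.val_mk, hv]
    split_ifs <;> omega

lemma t_c_apply {i : ℕ} (hi : i < n) (j : Fin n) :
    (t i : GenPerm m n).c j = if j.val = 0 then 1 else 0 := by
  induction i with
  | zero =>
    rw [t_zero, s_zero (by omega)]
    simp only [Fin.ext_iff, Fin.val_mk]
  | succ i ih =>
    rw [t_succ, s_pos (by omega) (by omega)]
    simp only [mul_c, Pi.zero_apply, zero_add]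
    exact ih (by omega)

def gtp (π : GenPerm m n) (a b : Fin n) : Prop :=
  (π.c a).val < (π.c b).val ∨ (π.c a = π.c b ∧ π.σ b < π.σ a)

instance (π : GenPerm m n) (a b : Fin n) : Decidable (gtp π a b) := by
  unfold gtp; infer_instance

def sumC (π : GenPerm m n) : ℕ := ∑ i, (π.c i).val

lemma majG_eq' (π : GenPerm m n) :
    majG π = ∑ p ∈ Finset.range n, if h : p + 1 < n then
      (if gtp π ⟨p, by omega⟩ ⟨p + 1, h⟩ then p + 1 else 0) else 0 := by
  unfold majG
  refine Finset.sum_congr rfl fun p hp => ?_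
  split
  · exact if_congr Iff.rfl rfl rfl
  · rfl

lemma zval_eq {m : ℕ} [NeZero m] (x y : ZMod m) : x = y ↔ x.val = y.val :=
  ⟨fun h => by rw [h], fun h => ZMod.val_injective _ h⟩

lemma gtp_iff [NeZero m] (π : GenPerm m n) (a b : Fin n) :
    gtp π a b ↔ ((π.c a).val < (π.c b).val ∨
      ((π.c a).val = (π.c b).val ∧ (π.σ b).val < (π.σ a).val)) := by
  unfold gtp
  rw [zval_eq, Fin.lt_def]

lemma zval_add_one {m : ℕ} [NeZero m] (x : ZMod m) :
    (x + 1).val = if x.val = m - 1 then 0 else x.val + 1 := by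
  have hx := ZMod.val_lt x
  rw [ZMod.val_add, ZMod.val_one_eq_one_mod]
  have hm : 0 < m := Nat.pos_of_ne_zero (NeZero.ne m)
  rcases Nat.lt_or_ge 1 m with h | h
  · rw [Nat.mod_eq_of_lt h]
    split_ifs with h2
    · rw [show x.val + 1 = m by omega, Nat.mod_self]
    · exact Nat.mod_eq_of_lt (by omega)
  · have hm1 : m = 1 := by omega
    subst hm1
    simp only [Nat.mod_one]
    rw [if_pos (by omega)]


set_option maxHeartbeats 1000000 in
lemma step [NeZero m] {i : ℕ} (hi : i < n) (π : GenPerm m n)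
    (hσ : ∀ j : Fin n, i < j.val → π.σ j = j)
    (hc : ∀ j : Fin n, i < j.val → π.c j = 0)
    (hx : ¬((π.σ ⟨i, hi⟩).val = 0 ∧ (π.c ⟨i, hi⟩).val = m - 1)) :
    m * majG (t i * π) + sumC (t i * π) = (m * majG π + sumC π) + 1 := by
  have hm : 0 < m := Nat.pos_of_ne_zero (NeZero.ne m)
  have hn : 0 < n := by omega
  set P : Fin n := π.σ.symm ⟨0, hn⟩ with hPdef
  have hP : π.σ P = ⟨0, hn⟩ := π.σ.apply_symm_apply _
  have hP0 : (π.σ P).val = 0 := by rw [hP]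
  have heq : ∀ b : Fin n, b = P ↔ (π.σ b).val = 0 := by
    intro b
    constructor
    · intro h; rw [h]; exact hP0
    · intro h
      exact π.σ.injective (show π.σ b = π.σ P from Fin.ext (by rw [hP0]; exact h))
  have hne : ∀ b : Fin n, b ≠ P ↔ (π.σ b).val ≠ 0 := fun b => not_congr (heq b)
  have hfix : ∀ j : Fin n, i < (π.σ j).val → π.σ j = j := by
    intro j h
    exact π.σ.injective (hσ _ h)
  have hvle : ∀ j : Fin n, j.val ≤ i → (π.σ j).val ≤ i := by
    intro j hj
    by_contra h
    have := hfix j (by omega)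
    rw [this] at h; omega
  have hcv : ∀ j : Fin n, i < (π.σ j).val → (π.c j).val = 0 := by
    intro j h
    have h2 := hfix j h
    have : i < j.val := by rw [h2] at h; exact h
    rw [hc j this, ZMod.val_zero]
  have hPle : P.val ≤ i := by
    by_contra h
    have h2 := hσ P (by omega)
    rw [h2] at hP
    have : P.val = 0 := by rw [hP]
    omega
  -- values after multiplication
  have sσ : ∀ j : Fin n, ((t i * π).σ j).val =
      if (π.σ j).val = 0 then i else if (π.σ j).val ≤ i then (π.σ j).val - 1
      else (π.σ j).val := by
    intro j
    rw [mul_σ, Equiv.Perm.mul_apply, t_sigma_val hi]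
  have cc : ∀ j : Fin n, (π.σ j).val ≠ 0 → ((t i * π).c j).val = (π.c j).val := by
    intro j hj
    rw [mul_c, t_c_apply hi, if_neg hj, zero_add]
  have ccP : ((t i * π).c P).val = if (π.c P).val = m - 1 then 0 else (π.c P).val + 1 := by
    rw [mul_c, t_c_apply hi, if_pos hP0, add_comm, zval_add_one]
  have sσP : ((t i * π).σ P).val = i := by rw [sσ, if_pos hP0]
  -- comparison keys
  have keyA : ∀ a b : Fin n, (π.σ a).val ≠ 0 → (π.σ b).val ≠ 0 →
      (gtp (t i * π) a b ↔ gtp π a b) := by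
    intro a b ha hb
    rw [gtp_iff, gtp_iff, cc a ha, cc b hb, sσ a, sσ b]
    split_ifs <;> omega
  have keyB : ∀ b : Fin n, (π.c P).val ≠ m - 1 → (π.σ b).val ≠ 0 →
      ((gtp (t i * π) P b ↔ gtp π P b) ∧ (gtp (t i * π) b P ↔ gtp π b P)) := by
    intro b hw hb
    have hfb := ZMod.val_lt (π.c b)
    have hfP := ZMod.val_lt (π.c P)
    have h1 : 1 ≤ (π.σ b).val := Nat.pos_of_ne_zero hb
    constructor
    · rw [gtp_iff, gtp_iff, cc b hb, ccP, if_neg hw, sσ b, sσP, hP0]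
      rcases Nat.lt_or_ge i (π.σ b).val with h | h
      · have hf0 := hcv b h
        rw [if_neg hb, if_neg (by omega)]
        omega
      · rw [if_neg hb, if_pos h]
        omega
    · rw [gtp_iff, gtp_iff, cc b hb, ccP, if_neg hw, sσ b, sσP, hP0]
      rcases Nat.lt_or_ge i (π.σ b).val with h | h
      · have hf0 := hcv b h
        rw [if_neg hb, if_neg (by omega)]
        omega
      · rw [if_neg hb, if_pos h]
        omega
  have keyC1 : ∀ b : Fin n, (π.c P).val = m - 1 → (π.σ b).val ≠ 0 →
      (gtp (t i * π) P b ↔ (π.σ b).val ≤ i) := by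
    intro b hw hb
    have hfb := ZMod.val_lt (π.c b)
    have h1 : 1 ≤ (π.σ b).val := Nat.pos_of_ne_zero hb
    rw [gtp_iff, cc b hb, ccP, if_pos hw, sσ b, sσP]
    rcases Nat.lt_or_ge i (π.σ b).val with h | h
    · have hf0 := hcv b h
      rw [if_neg hb, if_neg (by omega)]
      omega
    · rw [if_neg hb, if_pos h]
      omega
  have keyC2 : ∀ b : Fin n, (π.c P).val = m - 1 → (π.σ b).val ≠ 0 →
      (gtp (t i * π) b P ↔ i < (π.σ b).val) := by
    intro b hw hb
    have hfb := ZMod.val_lt (π.c b)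
    have h1 : 1 ≤ (π.σ b).val := Nat.pos_of_ne_zero hb
    rw [gtp_iff, cc b hb, ccP, if_pos hw, sσ b, sσP]
    rcases Nat.lt_or_ge i (π.σ b).val with h | h
    · have hf0 := hcv b h
      rw [if_neg hb, if_neg (by omega)]
      omega
    · rw [if_neg hb, if_pos h]
      omega
  have keyC3 : ∀ b : Fin n, (π.c P).val = m - 1 → (π.σ b).val ≠ 0 → ¬ gtp π P b := by
    intro b hw hb
    have hfb := ZMod.val_lt (π.c b)
    rw [gtp_iff, hP0]
    omega
  have keyC4 : ∀ b : Fin n, (π.c P).val = m - 1 → (π.σ b).val ≠ 0 → gtp π b P := by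
    intro b hw hb
    have hfb := ZMod.val_lt (π.c b)
    rw [gtp_iff, hP0]
    omega
  -- split on wrap
  rcases ne_or_eq (π.c P).val (m - 1) with hw | hw
  · -- no wrap
    have hmaj : majG (t i * π) = majG π := by
      rw [majG_eq', majG_eq']
      refine Finset.sum_congr rfl fun p hp => ?_
      split
      · next h =>
        have hab : (⟨p, by omega⟩ : Fin n) ≠ ⟨p + 1, h⟩ :=
          Fin.ne_of_val_ne (Nat.ne_of_lt (Nat.lt_succ_self p))
        refine if_congr ?_ rfl rfl
        by_cases hA : (⟨p, by omega⟩ : Fin n) = P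
        · rw [hA] at hab ⊢
          exact (keyB _ hw ((hne _).mp hab.symm)).1
        · by_cases hB : (⟨p + 1, h⟩ : Fin n) = P
          · rw [hB] at hab ⊢
            exact (keyB _ hw ((hne _).mp hab)).2
          · exact keyA _ _ ((hne _).mp hA) ((hne _).mp hB)
      · rfl
    have hsum : sumC (t i * π) = sumC π + 1 := by
      unfold sumC
      rw [← Finset.sum_erase_add _ _ (Finset.mem_univ P),
          ← Finset.sum_erase_add _ _ (Finset.mem_univ P)]
      rw [Finset.sum_congr rfl fun j hj => cc j ((hne j).mp (Finset.ne_of_mem_erase hj))]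
      rw [ccP, if_neg hw]
      omega
    rw [hmaj, hsum]
    omega
  · -- wrap
    have hPlt : P.val < i := by
      rcases Nat.lt_or_ge P.val i with h | h
      · exact h
      · exfalso
        have hPi : (⟨i, hi⟩ : Fin n) = P := Fin.ext (show i = P.val by omega)
        rw [← hPi] at hP0 hw
        exact hx ⟨hP0, hw⟩
    have hsum : sumC (t i * π) + (m - 1) = sumC π := by
      unfold sumC
      rw [← Finset.sum_erase_add _ _ (Finset.mem_univ P),
          ← Finset.sum_erase_add _ _ (Finset.mem_univ P)]
      rw [Finset.sum_congr rfl fun j hj => cc j ((hne j).mp (Finset.ne_of_mem_erase hj))]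
      rw [ccP, if_pos hw]
      have := ZMod.val_lt (π.c P)
      omega
    have hmaj : majG (t i * π) = majG π + 1 := by
      rw [majG_eq', majG_eq']
      have hkey : ∀ p ∈ Finset.range n, p ≠ P.val → p + 1 ≠ P.val →
          (if h : p + 1 < n then
            (if gtp (t i * π) ⟨p, by omega⟩ ⟨p + 1, h⟩ then p + 1 else 0) else 0) =
          (if h : p + 1 < n then
            (if gtp π ⟨p, by omega⟩ ⟨p + 1, h⟩ then p + 1 else 0) else 0) := by
        intro p hp h1 h2
        split
        · next h =>
          refine if_congr (keyA _ _ ((hne _).mp (Fin.ne_of_val_ne h1))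
            ((hne _).mp (Fin.ne_of_val_ne h2))) rfl rfl
        · rfl
      have hP1n : P.val + 1 < n := by omega
      have hPmem : P.val ∈ Finset.range n := Finset.mem_range.mpr (by omega)
      have hQ : (⟨P.val, Finset.mem_range.mp hPmem⟩ : Fin n) = P := Fin.ext rfl
      have htermP' : (if h : P.val + 1 < n then
          (if gtp (t i * π) ⟨P.val, by omega⟩ ⟨P.val + 1, h⟩ then P.val + 1 else 0) else 0)
          = P.val + 1 := by
        rw [dif_pos hP1n, if_pos]
        have h2 : (⟨P.val, by omega⟩ : Fin n) = P := Fin.ext rfl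
        rw [h2, keyC1 _ hw ((hne _).mp (Fin.ne_of_val_ne (show P.val + 1 ≠ P.val by omega)))]
        exact hvle _ (show P.val + 1 ≤ i by omega)
      have htermP : (if h : P.val + 1 < n then
          (if gtp π ⟨P.val, by omega⟩ ⟨P.val + 1, h⟩ then P.val + 1 else 0) else 0) = 0 := by
        rw [dif_pos hP1n, if_neg]
        have h2 : (⟨P.val, by omega⟩ : Fin n) = P := Fin.ext rfl
        rw [h2]
        exact keyC3 _ hw ((hne _).mp (Fin.ne_of_val_ne (show P.val + 1 ≠ P.val by omega)))
      rcases Nat.eq_zero_or_pos P.val with hp0 | hp0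
      · -- P at position 0
        rw [← Finset.add_sum_erase _ _ hPmem, ← Finset.add_sum_erase _ _ hPmem]
        rw [Finset.sum_congr rfl fun p hp => hkey p (Finset.mem_of_mem_erase hp)
          (Finset.ne_of_mem_erase hp)
          (by have := Finset.ne_of_mem_erase hp; omega)]
        rw [htermP', htermP]
        omega
      · -- P at positive position
        obtain ⟨q, hq⟩ : ∃ q, q + 1 = P.val := ⟨P.val - 1, by omega⟩
        have hm1mem : q ∈ (Finset.range n).erase P.val := by
          rw [Finset.mem_erase, Finset.mem_range]; omega
        rw [← Finset.add_sum_erase _ _ hPmem, ← Finset.add_sum_erase _ _ hPmem,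
            ← Finset.add_sum_erase _ _ hm1mem, ← Finset.add_sum_erase _ _ hm1mem]
        rw [Finset.sum_congr rfl fun p hp => hkey p
          (Finset.mem_of_mem_erase (Finset.mem_of_mem_erase hp))
          (Finset.ne_of_mem_erase (Finset.mem_of_mem_erase hp))
          (by
            have h1 := Finset.ne_of_mem_erase hp
            have h2 := Finset.ne_of_mem_erase (Finset.mem_of_mem_erase hp)
            omega)]
        have hq1 : q + 1 < n := by omega
        have hqn : q < n := by omega
        have hQ2 : (⟨q + 1, hq1⟩ : Fin n) = P := Fin.ext hq
        have hb0 : (π.σ (⟨q, hqn⟩ : Fin n)).val ≠ 0 :=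
          (hne _).mp (Fin.ne_of_val_ne (show q ≠ P.val by omega))
        have hterm2' : (if h : q + 1 < n then
            (if gtp (t i * π) ⟨q, by omega⟩ ⟨q + 1, h⟩ then q + 1 else 0)
            else 0) = 0 := by
          rw [dif_pos hq1, if_neg]
          simp only [hQ2]
          rw [keyC2 ⟨q, hqn⟩ hw hb0]
          have := hvle (⟨q, hqn⟩ : Fin n) (show q ≤ i by omega)
          omega
        have hterm2 : (if h : q + 1 < n then
            (if gtp π ⟨q, by omega⟩ ⟨q + 1, h⟩ then q + 1 else 0)
            else 0) = q + 1 := by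
          rw [dif_pos hq1, if_pos]
          simp only [hQ2]
          exact keyC4 ⟨q, hqn⟩ hw hb0
        rw [htermP', htermP, hterm2', hterm2]
        omega
    rw [hmaj, Nat.mul_add, Nat.mul_one]
    omega


lemma majG_one : majG (1 : GenPerm m n) = 0 := by
  rw [majG_eq']
  refine Finset.sum_eq_zero fun p hp => ?_
  split
  · next h =>
    have hng : ¬ gtp (1 : GenPerm m n) ⟨p, by omega⟩ ⟨p + 1, h⟩ := by
      intro hg
      rcases hg with h1 | ⟨h2, h3⟩
      · simp only [one_c, ZMod.val_zero] at h1
        omega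
      · simp only [one_σ, Equiv.Perm.one_apply, Fin.lt_def, Fin.val_mk] at h3
        omega
    rw [if_neg hng]
  · rfl

lemma sumC_one : sumC (1 : GenPerm m n) = 0 := by
  simp [sumC]

lemma tpow_aux [NeZero m] {i : ℕ} (hi : i < n) (ρ : GenPerm m n)
    (hσ : ∀ j : Fin n, i ≤ j.val → ρ.σ j = j)
    (hc : ∀ j : Fin n, i ≤ j.val → ρ.c j = 0) :
    ∀ a, a ≤ m * (i + 1) - 1 →
      (m * majG (t i ^ a * ρ) + sumC (t i ^ a * ρ) = (m * majG ρ + sumC ρ) + a)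
      ∧ ((i + 1) * ((t i ^ a * ρ).c ⟨i, hi⟩).val + (i - ((t i ^ a * ρ).σ ⟨i, hi⟩).val) = a)
      ∧ (∀ j : Fin n, i < j.val → (t i ^ a * ρ).σ j = j)
      ∧ (∀ j : Fin n, i < j.val → (t i ^ a * ρ).c j = 0) := by
  have hm : 0 < m := Nat.pos_of_ne_zero (NeZero.ne m)
  intro a
  induction a with
  | zero =>
    intro _
    rw [pow_zero, one_mul]
    refine ⟨by omega, ?_, fun j hj => hσ j (by omega), fun j hj => hc j (by omega)⟩
    rw [hc ⟨i, hi⟩ (le_refl i), hσ ⟨i, hi⟩ (le_refl i), ZMod.val_zero]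
    simp
  | succ a ih =>
    intro ha
    obtain ⟨ihF, ihInv, ihσ, ihc⟩ := ih (by omega)
    have hrw : t i ^ (a + 1) * ρ = t i * (t i ^ a * ρ) := by
      rw [pow_succ', mul_assoc]
    set π : GenPerm m n := t i ^ a * ρ with hπ
    have hvle : (π.σ ⟨i, hi⟩).val ≤ i := by
      by_contra h
      have h2 := ihσ (π.σ ⟨i, hi⟩) (by omega)
      have h3 : π.σ ⟨i, hi⟩ = ⟨i, hi⟩ := π.σ.injective h2
      rw [h3] at h
      simp at h
    have hx : ¬(((π.σ ⟨i, hi⟩)).val = 0 ∧ (π.c ⟨i, hi⟩).val = m - 1) := by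
      rintro ⟨h1, h2⟩
      rw [h1, h2] at ihInv
      have e1 : (i + 1) * (m - 1) + (i + 1) = (i + 1) * m := by
        rw [← Nat.mul_succ]
        congr 1
        omega
      have e2 : (i + 1) * m = m * (i + 1) := Nat.mul_comm _ _
      omega
    have hstep := step hi π ihσ ihc hx
    have sσi : ((t i * π).σ ⟨i, hi⟩).val =
        if (π.σ ⟨i, hi⟩).val = 0 then i else (π.σ ⟨i, hi⟩).val - 1 := by
      rw [mul_σ, Equiv.Perm.mul_apply, t_sigma_val hi]
      split_ifs <;> omega
    have sci : ((t i * π).c ⟨i, hi⟩).val =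
        if (π.σ ⟨i, hi⟩).val = 0 then (π.c ⟨i, hi⟩).val + 1 else (π.c ⟨i, hi⟩).val := by
      rw [mul_c, t_c_apply hi]
      split_ifs with h0
      · rw [add_comm, zval_add_one, if_neg]
        intro h2
        exact hx ⟨h0, h2⟩
      · rw [zero_add]
    refine ⟨?_, ?_, ?_, ?_⟩
    · rw [hrw]
      omega
    · rw [hrw, sσi, sci]
      split_ifs with h0
      · rw [h0] at ihInv
        rw [Nat.mul_succ]
        omega
      · have h1 : 1 ≤ (π.σ ⟨i, hi⟩).val := Nat.pos_of_ne_zero h0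
        omega
    · intro j hj
      rw [hrw, mul_σ, Equiv.Perm.mul_apply, ihσ j hj]
      refine Fin.ext ?_
      rw [t_sigma_val hi]
      rw [if_neg (by omega), if_neg (by omega)]
    · intro j hj
      rw [hrw, mul_c, t_c_apply hi, ihσ j hj, if_neg (by omega), ihc j hj, add_zero]

def prodT (k : ℕ → ℕ) : ℕ → GenPerm m n
  | 0 => 1
  | i + 1 => t i ^ (k i) * prodT k i

lemma prodT_spec [NeZero m] (k : ℕ → ℕ) (hk : ∀ i, i < n → k i ≤ m * (i + 1) - 1) :
    ∀ N, N ≤ n →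
      (m * majG (prodT k N : GenPerm m n) + sumC (prodT k N : GenPerm m n)
        = ∑ j ∈ Finset.range N, k j)
      ∧ (∀ j : Fin n, N ≤ j.val → (prodT k N : GenPerm m n).σ j = j)
      ∧ (∀ j : Fin n, N ≤ j.val → (prodT k N : GenPerm m n).c j = 0) := by
  intro N
  induction N with
  | zero =>
    intro _
    refine ⟨?_, fun j _ => by simp [prodT], fun j _ => by simp [prodT]⟩
    simp [prodT, majG_one, sumC_one]
  | succ N ih =>
    intro hN
    obtain ⟨ihF, ihσ, ihc⟩ := ih (by omega)
    have hi : N < n := by omega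
    have haux := tpow_aux hi (prodT k N) ihσ ihc (k N) (hk N hi)
    have hd : (prodT k (N + 1) : GenPerm m n) = t N ^ (k N) * prodT k N := rfl
    refine ⟨?_, ?_, ?_⟩
    · rw [hd, haux.1, ihF, Finset.sum_range_succ]
    · intro j hj
      rw [hd]
      exact haux.2.2.1 j (by omega)
    · intro j hj
      rw [hd]
      exact haux.2.2.2 j (by omega)

lemma prodT_inj [NeZero m] (k k' : ℕ → ℕ) (hk : ∀ i, i < n → k i ≤ m * (i + 1) - 1)
    (hk' : ∀ i, i < n → k' i ≤ m * (i + 1) - 1) :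
    ∀ N, N ≤ n → (prodT k N : GenPerm m n) = prodT k' N → ∀ j, j < N → k j = k' j := by
  intro N
  induction N with
  | zero => intro _ _ j hj; omega
  | succ N ih =>
    intro hN heq j hj
    have hi : N < n := by omega
    have hs := prodT_spec k hk N (by omega)
    have hs' := prodT_spec k' hk' N (by omega)
    have E1 := (tpow_aux hi (prodT k N) hs.2.1 hs.2.2 (k N) (hk N hi)).2.1
    have E2 := (tpow_aux hi (prodT k' N) hs'.2.1 hs'.2.2 (k' N) (hk' N hi)).2.1
    have hd : (prodT k (N + 1) : GenPerm m n) = t N ^ (k N) * prodT k N := rfl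
    have hd' : (prodT k' (N + 1) : GenPerm m n) = t N ^ (k' N) * prodT k' N := rfl
    rw [← hd] at E1
    rw [← hd'] at E2
    have hkN : k N = k' N := by rw [← E1, ← E2, heq]
    rcases Nat.lt_or_ge j N with h | h
    · refine ih (by omega) ?_ j h
      have heq2 : (prodT k (N + 1) : GenPerm m n) = prodT k' (N + 1) := heq
      rw [hd, hd', hkN] at heq2
      exact mul_left_cancel heq2
    · have : j = N := by omega
      rw [this, hkN]

lemma rep_eq_prodT [NeZero m] (k : Fin n → ℕ) :
    rep k = (prodT (fun j => if h : j < n then k ⟨j, h⟩ else 0) n : GenPerm m n) := by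
  set g : ℕ → ℕ := fun j => if h : j < n then k ⟨j, h⟩ else 0 with hg
  have hlist : List.ofFn (fun i : Fin n => (t (i : ℕ) : GenPerm m n) ^ k i)
      = (List.range n).map (fun j => (t j : GenPerm m n) ^ g j) := by
    refine List.ext_getElem (by simp) ?_
    intro j h1 h2
    simp only [List.getElem_ofFn, List.getElem_map, List.getElem_range]
    have hjn : j < n := by simpa using h1
    rw [hg]
    simp only [dif_pos hjn]
  rw [rep, hlist]
  have : ∀ N, N ≤ n → (((List.range N).map
      (fun j => (t j : GenPerm m n) ^ g j)).reverse.prod : GenPerm m n) = prodT g N := by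
    intro N
    induction N with
    | zero => intro _; simp [prodT]
    | succ N ih =>
      intro hN
      rw [List.range_succ, List.map_append, List.reverse_append]
      simp only [List.map_cons, List.map_nil, List.reverse_cons, List.reverse_nil,
        List.nil_append, List.cons_append, List.prod_cons]
      rw [ih (by omega)]
      rfl
  exact this n (le_refl n)

lemma exists_rep [NeZero m] (π : GenPerm m n) :
    ∃ k : Fin n → ℕ, (∀ i : Fin n, k i < m * ((i : ℕ) + 1)) ∧ π = rep k := by
  have hm : 0 < m := Nat.pos_of_ne_zero (NeZero.ne m)
  set Φ : (∀ i : Fin n, Fin (m * ((i : ℕ) + 1))) → GenPerm m n :=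
    fun x => rep (fun i => (x i).val) with hΦ
  have hinj : Function.Injective Φ := by
    intro x y hxy
    rw [hΦ] at hxy
    simp only at hxy
    rw [rep_eq_prodT, rep_eq_prodT] at hxy
    have hb : ∀ (z : ∀ i : Fin n, Fin (m * ((i : ℕ) + 1))) (i : ℕ), i < n →
        (if h : i < n then ((z ⟨i, h⟩ : Fin _) : ℕ) else 0) ≤ m * (i + 1) - 1 := by
      intro z i hi
      rw [dif_pos hi]
      have h5 : (z ⟨i, hi⟩).val < m * (i + 1) := (z ⟨i, hi⟩).isLt
      omega
    have := prodT_inj _ _ (hb x) (hb y) n (le_refl n) hxy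
    funext i
    have h2 := this i.val i.isLt
    simp only [dif_pos i.isLt, Fin.eta] at h2
    exact Fin.ext h2
  have hcard : Fintype.card (∀ i : Fin n, Fin (m * ((i : ℕ) + 1)))
      = Fintype.card (GenPerm m n) := by
    rw [Fintype.card_pi]
    have h1 : Fintype.card (GenPerm m n)
        = Fintype.card (Equiv.Perm (Fin n) × (Fin n → ZMod m)) := by
      refine Fintype.card_congr ?_
      exact {
        toFun := fun g => (g.σ, g.c)
        invFun := fun p => ⟨p.1, p.2⟩
        left_inv := fun g => rfl
        right_inv := fun p => rfl }
    rw [h1, Fintype.card_prod, Fintype.card_perm, Fintype.card_fin,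
      Fintype.card_fun, ZMod.card, Fintype.card_fin]
    simp only [Fintype.card_fin]
    rw [Finset.prod_mul_distrib, Finset.prod_const, Finset.card_univ, Fintype.card_fin]
    have h2 : ∏ i : Fin n, ((i : ℕ) + 1) = n.factorial := by
      rw [Fin.prod_univ_eq_prod_range (fun j => j + 1) n]
      exact Finset.prod_range_add_one_eq_factorial n
    rw [h2, Nat.mul_comm]
  have hbij : Function.Bijective Φ :=
    (Fintype.bijective_iff_injective_and_card Φ).mpr ⟨hinj, hcard⟩
  obtain ⟨x, hx⟩ := hbij.2 π
  exact ⟨fun i => (x i).val, fun i => (x i).isLt, hx.symm⟩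

lemma rep_F [NeZero m] (k : Fin n → ℕ) (hk : ∀ i : Fin n, k i < m * ((i : ℕ) + 1)) :
    m * majG (rep k : GenPerm m n) + sumC (rep k : GenPerm m n) = ∑ i, k i := by
  rw [rep_eq_prodT]
  have hb : ∀ i, i < n → (if h : i < n then k ⟨i, h⟩ else 0) ≤ m * (i + 1) - 1 := by
    intro i hi
    rw [dif_pos hi]
    have h5 : k ⟨i, hi⟩ < m * (i + 1) := hk ⟨i, hi⟩
    omega
  rw [(prodT_spec _ hb n (le_refl n)).1]
  rw [← Fin.sum_univ_eq_sum_range (fun j => if h : j < n then k ⟨j, h⟩ else 0) n]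
  refine Finset.sum_congr rfl fun i _ => ?_
  rw [dif_pos i.isLt, Fin.eta]

lemma sumC_eq_fibers [NeZero m] (π : GenPerm m n) :
    sumC π = ∑ j ∈ Finset.range m,
      j * (Finset.univ.filter (fun i : Fin n => (π.c i).val = j)).card := by
  unfold sumC
  rw [← Finset.sum_fiberwise_of_maps_to
      (g := fun i : Fin n => (π.c i).val) (t := Finset.range m)
      (fun i _ => Finset.mem_range.mpr (ZMod.val_lt (π.c i))) (fun i => (π.c i).val)]
  refine Finset.sum_congr rfl fun j hj => ?_
  rw [Finset.sum_congr rfl (fun i hi => (Finset.mem_filter.mp hi).2),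
      Finset.sum_const, smul_eq_mul, mul_comm]


end Aux


/-- the combinatorial formula
`flag-major(π) = m · maj(π) + Σ_{j=0}^{m-1} j · #{i : phase of π(i) is ω^j}`,
where `maj` is taken with respect to the order
`1·ω^{m-1} < ⋯ < n·ω^{m-1} < ⋯ < 1·ω < ⋯ < n·ω < 1 < ⋯ < n`. -/
theorem flagMajor_eq (m n : ℕ) (hm : 0 < m) (π : GenPerm m n) :
    flagMajor π = m * majG π +
      ∑ j ∈ Finset.range m,
        j * (Finset.univ.filter (fun i : Fin n => (π.c i).val = j)).card := by
  haveI : NeZero m := ⟨hm.ne'⟩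
  have hex : ∃ k : Fin n → ℕ, (∀ i : Fin n, k i < m * ((i : ℕ) + 1)) ∧ π = rep k :=
    exists_rep π
  unfold flagMajor
  rw [dif_pos hex]
  obtain ⟨hb, hrep⟩ := hex.choose_spec
  calc ∑ i, hex.choose i
      = m * majG (rep hex.choose : GenPerm m n) + sumC (rep hex.choose : GenPerm m n) :=
        (rep_F _ hb).symm
    _ = m * majG π + sumC π := by rw [← hrep]
    _ = m * majG π + ∑ j ∈ Finset.range m,
          j * (Finset.univ.filter (fun i : Fin n => (π.c i).val = j)).card := by
        rw [sumC_eq_fibers]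

end GenPerm
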